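/- Let G be a partially directed graph on a finite vertex set V that is strictly acyclic and satisfies: whenever I→J is a directed edge and J—K is an undirected edge of G, the vertices I and K are adjacent. Let X and Y be disjoint vertex subsets such that G has no proper semi-directed path from X to Y that starts with an undirected edge. Then in the graph RM(G;X,Y), whenever I→J is a directed edge and J—K is an undirected edge, the directed edge I→K is also present. -/

import Mathlib

open scoped Classical

/-- A partially directed graph on vertex type `V`: directed edges `dir i j` (i→j) and
undirected edges `undir i j` (i—j), with at most one edge between any two vertices. -/
structure PDG (V : Type) where
  dir : V → V → Prop
  undir : V → V → Prop
  undir_symm : ∀ i j, undir i j → undir j i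
  undir_irrefl : ∀ i, ¬ undir i i
  dir_irrefl : ∀ i, ¬ dir i i
  not_dir_dir : ∀ i j, dir i j → ¬ dir j i
  not_dir_undir : ∀ i j, dir i j → ¬ undir i j

namespace PDG

variable {V : Type}

/-- Adjacency: joined by some edge. -/
def Adj (G : PDG V) (i j : V) : Prop := G.dir i j ∨ G.dir j i ∨ G.undir i j

/-- A semi-directed step from `i` to `j`: an undirected edge or a directed edge `i→j`. -/
def SStep (G : PDG V) (i j : V) : Prop := G.dir i j ∨ G.undir i j

/-- Existence of a semi-directed cycle: `f 0, …, f m` with `f 0 = f m`, `m ≥ 2`,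
each consecutive pair a semi-directed step, at least one step directed. -/
def HasSemiDirectedCycle (G : PDG V) : Prop :=
  ∃ (m : ℕ) (f : ℕ → V), 2 ≤ m ∧ f 0 = f m ∧
    (∀ i < m, G.SStep (f i) (f (i + 1))) ∧ (∃ i < m, G.dir (f i) (f (i + 1)))

/-- Strictly acyclic: no semi-directed cycle. -/
def StrictlyAcyclic (G : PDG V) : Prop := ¬ G.HasSemiDirectedCycle

/-- Joined by a path of undirected edges (possibly trivial). -/
def sameChain (G : PDG V) (i j : V) : Prop := Relation.ReflTransGen G.undir i j

/-- The chain component of a vertex. -/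
def chainComp (G : PDG V) (i : V) : Set V := {j | G.sameChain i j}

/-- Parents of a vertex set. -/
def Pa (G : PDG V) (D : Set V) : Set V := {i | ∃ d ∈ D, G.dir i d}

/-- Ancestors of a vertex set (directed path, possibly of length 0). -/
def An (G : PDG V) (D : Set V) : Set V := {i | ∃ d ∈ D, Relation.ReflTransGen G.dir i d}

/-- A DAG: only directed edges, and no directed cycles. -/
def IsDAG (G : PDG V) : Prop :=
  (∀ i j, ¬ G.undir i j) ∧ ∀ i, ¬ Relation.TransGen G.dir i i

/-- Unshielded collider `(i, k, j)`: `i→k ← j` with `i`, `j` distinct and non-adjacent. -/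
def UC (G : PDG V) (i k j : V) : Prop :=
  i ≠ j ∧ G.dir i k ∧ G.dir j k ∧ ¬ G.Adj i j

/-- `D ∈ [G]`: `D` is a DAG with the same skeleton as `G`, containing every directed edge
of `G`, all of whose unshielded colliders are unshielded colliders of `G`. -/
def InClass (D G : PDG V) : Prop :=
  D.IsDAG ∧ (∀ i j, D.Adj i j ↔ G.Adj i j) ∧ (∀ i j, G.dir i j → D.dir i j) ∧
    (∀ i k j, D.UC i k j → G.UC i k j)

/-- `C` is a nonempty set, connected by undirected edges within `C`, receiving a directed
edge from `I` and one from `J`. -/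
def ComplexCand (G : PDG V) (I : V) (C : Set V) (J : V) : Prop :=
  C.Nonempty ∧
  (∀ a ∈ C, ∀ b ∈ C,
    Relation.ReflTransGen (fun x y => G.undir x y ∧ x ∈ C ∧ y ∈ C) a b) ∧
  (∃ c ∈ C, G.dir I c) ∧ (∃ c ∈ C, G.dir J c)

/-- Minimal complex `(I, C, J)` of `G`. -/
def MinimalComplex (G : PDG V) (I : V) (C : Set V) (J : V) : Prop :=
  I ≠ J ∧ ¬ G.Adj I J ∧ (∀ a ∈ C, ∀ b ∈ C, G.sameChain a b) ∧
  G.ComplexCand I C J ∧ ∀ C' ⊂ C, ¬ G.ComplexCand I C' J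

/-- Remove all directed edges pointing into `S`. -/
def removeInto (G : PDG V) (S : Set V) : PDG V where
  dir i j := G.dir i j ∧ j ∉ S
  undir := G.undir
  undir_symm := G.undir_symm
  undir_irrefl := G.undir_irrefl
  dir_irrefl i h := G.dir_irrefl i h.1
  not_dir_dir i j h h' := G.not_dir_dir i j h.1 h'.1
  not_dir_undir i j h h' := G.not_dir_undir i j h.1 h'

/-- Induced subgraph on the vertex set `D` (kept on the same vertex type; edges
outside `D` are discarded). -/
def induce (G : PDG V) (D : Set V) : PDG V where
  dir i j := G.dir i j ∧ i ∈ D ∧ j ∈ D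
  undir i j := G.undir i j ∧ i ∈ D ∧ j ∈ D
  undir_symm i j h := ⟨G.undir_symm i j h.1, h.2.2, h.2.1⟩
  undir_irrefl i h := G.undir_irrefl i h.1
  dir_irrefl i h := G.dir_irrefl i h.1
  not_dir_dir i j h h' := G.not_dir_dir i j h.1 h'.1
  not_dir_undir i j h h' := G.not_dir_undir i j h.1 h'.1

/-- `G(↛X)`: `G` with every directed edge into `X ∩ An_G(Y)` removed. -/
def noInto (G : PDG V) (X Y : Set V) : PDG V := G.removeInto (X ∩ G.An Y)

/-- `RM(G; X, Y)`: the induced subgraph of `G(↛X)` on `An_{G(↛X)}(Y)`. -/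
def RM (G : PDG V) (X Y : Set V) : PDG V :=
  (G.noInto X Y).induce ((G.noInto X Y).An Y)

/-- There is a proper semi-directed path from `X` to `Y` starting with an undirected
edge: distinct vertices `f 0 ∈ X, …, f m ∈ Y`, only `f 0` in `X`, each consecutive pair a
semi-directed step, the first edge undirected. -/
def HasProperUndirStartPath (G : PDG V) (X Y : Set V) : Prop :=
  ∃ (m : ℕ) (f : ℕ → V), 1 ≤ m ∧
    (∀ i ≤ m, ∀ j ≤ m, f i = f j → i = j) ∧
    f 0 ∈ X ∧ f m ∈ Y ∧ (∀ i < m, G.SStep (f i) (f (i + 1))) ∧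
    (∀ i, 1 ≤ i → i ≤ m → f i ∉ X) ∧ G.undir (f 0) (f 1)

/-- Membership in the chain decomposition `CD_G(D)`: the nonempty intersections of `D`
with chain components of `G`. -/
def CDmem (G : PDG V) (D S : Set V) : Prop :=
  S.Nonempty ∧ ∃ i, S = D ∩ G.chainComp i

end PDG

noncomputable section Prob

open PDG

variable {V : Type} [Fintype V] [DecidableEq V] {𝒳 : V → Type} [∀ i, Fintype (𝒳 i)]
  [∀ i, Nonempty (𝒳 i)]

/-- Marginal `p_S(v_S)`: sum of `p` over configurations agreeing with `v` on `S`. -/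
def marginal (p : (∀ i, 𝒳 i) → ℝ) (S : Set V) (v : ∀ i, 𝒳 i) : ℝ :=
  ∑ w : ∀ i, 𝒳 i, if ∀ i ∈ S, w i = v i then p w else 0

/-- Conditional `p(v_A | v_S) = p_{A∪S}(v_{A∪S}) / p_S(v_S)`. -/
def condP (p : (∀ i, 𝒳 i) → ℝ) (A S : Set V) (v : ∀ i, 𝒳 i) : ℝ :=
  marginal p (A ∪ S) v / marginal p S v

/-- A strictly positive pmf. -/
def IsPositivePMF (p : (∀ i, 𝒳 i) → ℝ) : Prop :=
  (∀ v, 0 < p v) ∧ ∑ v : ∀ i, 𝒳 i, p v = 1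

/-- `p` factorizes according to the DAG `D`. -/
def FactorizesDAG (p : (∀ i, 𝒳 i) → ℝ) (D : PDG V) : Prop :=
  ∀ v, p v = ∏ i : V, condP p {i} (D.Pa {i}) v

/-- The (finitely many) chain components of `G`. -/
def chainComponents (G : PDG V) : Finset (Set V) :=
  Finset.univ.image (fun i => G.chainComp i)

/-- The outer chain-graph factorization `∏_τ p(v_τ | v_{Pa_G(τ)})` over chain
components `τ` of `G`. -/
def chainProd (G : PDG V) (p : (∀ i, 𝒳 i) → ℝ) (v : ∀ i, 𝒳 i) : ℝ :=
  ∏ τ ∈ chainComponents G, condP p τ (G.Pa τ) v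

/-- The product `∏_j p(v_{D_j} | v_{Pa_G(D_j)})` over the chain decomposition
`CD_G(D) = {D_1,…,D_k}` (empty intersections contribute a factor `1`). -/
def cdProd (G : PDG V) (p : (∀ i, 𝒳 i) → ℝ) (D : Set V) (v : ∀ i, 𝒳 i) : ℝ :=
  ∏ τ ∈ chainComponents G, condP p (D ∩ τ) (G.Pa (D ∩ τ)) v

/-- The identification formula (g-formula) of Perković's theorem:
`Σ_b ∏_j p(b_j | pa_G(B_j))` where `{B_1,…,B_k} = CD_G(An_{G_{V∖X}}(Y))`,
the sum running over configurations of `B = An_{G_{V∖X}}(Y) ∖ Y`, all other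
coordinates (in particular the intervened values on `X` and the values on `Y`)
being fixed by `v`. -/
def gFormula (G : PDG V) (p : (∀ i, 𝒳 i) → ℝ) (X Y : Set V) (v : ∀ i, 𝒳 i) : ℝ :=
  ∑ w : ∀ i, 𝒳 i,
    if ∀ i, i ∉ (G.induce Xᶜ).An Y \ Y → w i = v i then
      cdProd G p ((G.induce Xᶜ).An Y) w
    else 0

/-- The re-weighting formula `Σ_{v'} p(v) / ∏_j p(x_j | pa_G(X_j))`, where
`{X_1,…,X_m} = CD_G(X ∩ An_G(Y))` and the sum runs over configurations of
`V ∖ (X ∪ Y)`, the coordinates on `X ∪ Y` being fixed by `v`. -/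
def rwFormula (G : PDG V) (p : (∀ i, 𝒳 i) → ℝ) (X Y : Set V) (v : ∀ i, 𝒳 i) : ℝ :=
  ∑ w : ∀ i, 𝒳 i,
    if ∀ i ∈ X ∪ Y, w i = v i then p w / cdProd G p (X ∩ G.An Y) w else 0

/-- The `Y`-marginal of the truncated factorization of `p` with respect to the DAG `D`:
`Σ_{v_{V∖(X∪Y)}} ∏_{i ∈ V∖X} p(v_i | v_{Pa_D(i)})`, the coordinates on `X ∪ Y` being
fixed by `v`. -/
def truncMarg (D : PDG V) (p : (∀ i, 𝒳 i) → ℝ) (X Y : Set V) (v : ∀ i, 𝒳 i) : ℝ :=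
  ∑ w : ∀ i, 𝒳 i,
    if ∀ i ∈ X ∪ Y, w i = v i then
      ∏ i ∈ Finset.univ.filter (fun i => i ∉ X), condP p {i} (D.Pa {i}) w
    else 0

end Prob

section Aux

variable {V : Type}

/-- Any `ReflTransGen` witness gives a chain `f 0, …, f m`. -/
lemma exists_chain (r : V → V → Prop) {a b : V} (h : Relation.ReflTransGen r a b) :
    ∃ (m : ℕ) (f : ℕ → V), f 0 = a ∧ f m = b ∧ ∀ i < m, r (f i) (f (i + 1)) := by
  induction h with
  | refl => exact ⟨0, fun _ => a, rfl, rfl, by omega⟩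
  | @tail b c hab hbc ih =>
    obtain ⟨m, f, h0, hm, hs⟩ := ih
    refine ⟨m + 1, fun k => if k ≤ m then f k else c, by simp [h0], by simp, ?_⟩
    intro i hi
    rcases lt_or_ge i m with hlt | hge
    · simpa [Nat.le_of_lt hlt, Nat.succ_le_of_lt hlt] using hs i hlt
    · have : i = m := by omega
      subst this
      simpa [hm] using hbc

/-- Extract a chain with pairwise distinct vertices. -/
lemma exists_injective_chain (r : V → V → Prop) {a b : V}
    (h : Relation.ReflTransGen r a b) :
    ∃ (m : ℕ) (f : ℕ → V), f 0 = a ∧ f m = b ∧ (∀ i < m, r (f i) (f (i + 1))) ∧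
      (∀ i ≤ m, ∀ j ≤ m, f i = f j → i = j) := by
  have hex : ∃ m : ℕ, ∃ f : ℕ → V, f 0 = a ∧ f m = b ∧ ∀ i < m, r (f i) (f (i + 1)) :=
    exists_chain r h
  classical
  obtain ⟨f, h0, hm, hs⟩ := Nat.find_spec hex
  set m := Nat.find hex with hmdef
  refine ⟨m, f, h0, hm, hs, ?_⟩
  by_contra hinj
  push_neg at hinj
  obtain ⟨i, hi, j, hj, hij, hne⟩ := hinj
  -- wlog i < j
  wlog hlt : i < j generalizing i j
  · exact this j hj i hi hij.symm (Ne.symm hne) (by omega)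
  -- build a shorter chain
  have hjm : 0 < j - i := by omega
  set d := j - i with hd
  have hshort : m - d < m := by omega
  apply Nat.find_min hex hshort
  refine ⟨fun k => if k ≤ i then f k else f (k + d), ?_, ?_, ?_⟩
  · simp [h0]
  · rcases eq_or_lt_of_le (show i ≤ m - d by omega) with heq | hlt2
    · have hjm' : j = m := by omega
      simp only [← heq, le_refl, if_pos]
      rw [hij, hjm', hm]
    · have : ¬ (m - d ≤ i) := by omega
      simp only [this, if_neg, if_false]
      have : m - d + d = m := by omega
      rw [this, hm]
  · intro k hk
    rcases le_or_gt (k + 1) i with hk1 | hk1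
    · have : k ≤ i := by omega
      simp only [this, hk1, if_pos]
      exact hs k (by omega)
    · rcases le_or_gt k i with hk2 | hk2
      · have hki : k = i := by omega
        subst hki
        have h1 : ¬ (k + 1 ≤ k) := by omega
        simp only [le_refl, if_pos, h1, if_neg, if_false]
        have : k + 1 + d = j + 1 := by omega
        rw [this, hij]
        exact hs j (by omega)
      · have h1 : ¬ (k ≤ i) := by omega
        have h2 : ¬ (k + 1 ≤ i) := by omega
        simp only [h1, h2, if_neg, if_false]
        have : k + 1 + d = k + d + 1 := by omega
        rw [this]
        exact hs (k + d) (by omega)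

/-- Along a chain, every vertex reaches the last one. -/
lemma chain_reaches (r : V → V → Prop) {m : ℕ} {f : ℕ → V}
    (hs : ∀ i < m, r (f i) (f (i + 1))) :
    ∀ i ≤ m, Relation.ReflTransGen r (f i) (f m) := by
  intro i hi
  obtain ⟨d, hd⟩ : ∃ d, m = i + d := ⟨m - i, by omega⟩
  subst hd
  clear hi
  induction d with
  | zero => exact Relation.ReflTransGen.refl
  | succ n ih =>
    have step : ∀ k < i + n, r (f k) (f (k + 1)) := fun k hk => hs k (by omega)
    exact (ih step).tail (hs (i + n) (by omega))

end Aux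

/-- If `G` is strictly acyclic with `I→J, J—K ⇒ I, K` adjacent, and there is
no proper semi-directed path from `X` to `Y` starting with an undirected edge, then in
`RM(G;X,Y)` the configuration `I→J, J—K` always comes with the directed edge `I→K`. -/
theorem stmt5 {V : Type} [Fintype V] (G : PDG V)
    (hSA : G.StrictlyAcyclic)
    (hMeek : ∀ I J K : V, G.dir I J → G.undir J K → G.Adj I K)
    (X Y : Set V) (hXY : Disjoint X Y)
    (hpath : ¬ G.HasProperUndirStartPath X Y) :
    ∀ I J K : V, (G.RM X Y).dir I J → (G.RM X Y).undir J K → (G.RM X Y).dir I K := by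
  intro I J K hdIJ huJK
  obtain ⟨⟨hGIJ, hJnot⟩, hIA, hJA⟩ := hdIJ
  obtain ⟨hGJK, hJA', hKA⟩ := huJK
  -- `hGJK : G.undir J K`
  have hadj := hMeek I J K hGIJ hGJK
  -- Step 1: the edge between I and K must be I→K, by strict acyclicity.
  have hdirIK : G.dir I K := by
    rcases hadj with h | h | h
    · exact h
    · exfalso
      apply hSA
      refine ⟨3, fun n => match n with | 0 => K | 1 => I | 2 => J | _ => K,
        by omega, rfl, ?_, ⟨0, by omega, h⟩⟩
      intro i hi
      interval_cases i
      · exact Or.inl h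
      · exact Or.inl hGIJ
      · exact Or.inr hGJK
    · exfalso
      apply hSA
      refine ⟨3, fun n => match n with | 0 => I | 1 => J | 2 => K | _ => I,
        by omega, rfl, ?_, ⟨0, by omega, hGIJ⟩⟩
      intro i hi
      interval_cases i
      · exact Or.inl hGIJ
      · exact Or.inr hGJK
      · exact Or.inr (G.undir_symm I K h)
  -- Step 2: K ∉ X ∩ An_G(Y), else there would be a forbidden path.
  have hKnot : K ∉ X ∩ G.An Y := by
    intro hK
    apply hpath
    -- J is an ancestor of Y in G(↛X); extract an injective directed chain J → … → y ∈ Y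
    obtain ⟨y, hyY, hJy⟩ := hJA
    obtain ⟨m, f, h0, hm, hs, hinj⟩ :=
      exists_injective_chain (G.noInto X Y).dir hJy
    -- every vertex on the chain is an ancestor of Y in G
    have hAnG : ∀ i ≤ m, f i ∈ G.An Y := by
      intro i hi
      refine ⟨y, hyY, ?_⟩
      rw [← hm]
      exact Relation.ReflTransGen.mono (fun a b (hab : (G.noInto X Y).dir a b) => hab.1) _ _ (chain_reaches _ hs i hi)
    -- no vertex on the chain lies in X ∩ An_G(Y)
    have hnotXAn : ∀ i ≤ m, f i ∉ X ∩ G.An Y := by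
      intro i hi
      cases i with
      | zero => rw [h0]; exact hJnot
      | succ n => exact (hs n (by omega)).2
    have hnotX : ∀ i ≤ m, f i ∉ X := fun i hi hx => hnotXAn i hi ⟨hx, hAnG i hi⟩
    -- build the forbidden path K, f 0 = J, f 1, …, f m = y
    refine ⟨m + 1, fun n => match n with | 0 => K | n + 1 => f n, by omega, ?_, hK.1,
      ?_, ?_, ?_, ?_⟩
    · intro i hi j hj hij
      match i, j with
      | 0, 0 => rfl
      | 0, j + 1 =>
        exact absurd (show K = f j from hij) (fun h => hnotX j (by omega) (h ▸ hK.1))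
      | i + 1, 0 =>
        exact absurd (show f i = K from hij) (fun h => hnotX i (by omega) (h.symm ▸ hK.1))
      | i + 1, j + 1 =>
        have := hinj i (by omega) j (by omega) (show f i = f j from hij)
        omega
    · show f m ∈ Y
      rw [hm]; exact hyY
    · intro i hi
      match i with
      | 0 =>
        show G.SStep K (f 0)
        rw [h0]; exact Or.inr (G.undir_symm J K hGJK)
      | i + 1 => exact Or.inl (hs i (by omega)).1
    · intro i h1 h2
      match i with
      | i + 1 => exact hnotX i (by omega)
    · show G.undir K (f 0)
      rw [h0]; exact G.undir_symm J K hGJK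
  exact ⟨⟨hdirIK, hKnot⟩, hIA, hKA⟩
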